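/- If a Banach space X admits an equivalent norm that is asymptotically uniformly convex, then Φ(X) ≤ ω, where ω is the first infinite ordinal. -/

import Mathlib

open Metric Set Pointwise

noncomputable section

/-- The weak topology on a normed space `X`: the initial topology with respect to all
continuous linear functionals. -/
noncomputable def weakTop (X : Type*) [NormedAddCommGroup X] [NormedSpace ℝ X] :
    TopologicalSpace X :=
  ⨅ f : X →L[ℝ] ℝ, TopologicalSpace.induced (⇑f) inferInstance

/-- A set is weakly open if it is open for the weak topology. -/
def IsWeaklyOpen {X : Type*} [NormedAddCommGroup X] [NormedSpace ℝ X] (V : Set X) : Prop :=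
  @IsOpen X (weakTop X) V

/-- The derived set `σ_ε(K)`: remove from `K` the union of all weakly open sets `V` whose
trace on `K` has (norm) diameter `< ε`. -/
noncomputable def dSet {X : Type*} [NormedAddCommGroup X] [NormedSpace ℝ X] (ε : ℝ)
    (K : Set X) : Set X :=
  K \ ⋃₀ {V : Set X | IsWeaklyOpen V ∧ Metric.diam (V ∩ K) < ε}

/-- The transfinite iterates `σ_ε^α(K)`: `σ_ε^0(K) = K`, `σ_ε^{α+1}(K) = σ_ε(σ_ε^α(K))`,
and `σ_ε^α(K) = ⋂_{β<α} σ_ε^β(K)` for `α` a limit ordinal. -/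
noncomputable def dIter {X : Type*} [NormedAddCommGroup X] [NormedSpace ℝ X] (ε : ℝ)
    (K : Set X) (α : Ordinal.{0}) : Set X :=
  Ordinal.limitRecOn α K (fun _ ih => dSet ε ih)
    (fun o _ ih => ⋂ (β : Ordinal.{0}) (h : β < o), ih β h)

/-- `Φ(X, ε)`: the least ordinal `α` with `σ_ε^α(B_X) = ∅` (junk value `0` if there is none). -/
noncomputable def PhiEps (X : Type*) [NormedAddCommGroup X] [NormedSpace ℝ X] (ε : ℝ) :
    Ordinal.{0} :=
  sInf {γ : Ordinal.{0} | dIter ε (Metric.closedBall (0 : X) 1) γ = ∅}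

/-- `Φ(X, ε)` is well defined, i.e. some derived iterate of the unit ball is empty. -/
def PhiDefinedAt (X : Type*) [NormedAddCommGroup X] [NormedSpace ℝ X] (ε : ℝ) : Prop :=
  ∃ γ : Ordinal.{0}, dIter ε (Metric.closedBall (0 : X) 1) γ = ∅

/-- `Φ(X) < ∞`, i.e. `Φ(X, ε)` is well defined for every `ε > 0`. -/
def PhiDefined (X : Type*) [NormedAddCommGroup X] [NormedSpace ℝ X] : Prop :=
  ∀ ε : ℝ, 0 < ε → PhiDefinedAt X ε

/-- The weak-fragmentability index `Φ(X) = sup_{ε > 0} Φ(X, ε)`. -/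
noncomputable def Phi (X : Type*) [NormedAddCommGroup X] [NormedSpace ℝ X] : Ordinal.{0} :=
  ⨆ ε : {ε : ℝ // 0 < ε}, PhiEps X ε.1

/-- The modulus of asymptotic uniform convexity `δ̄_X(t)`. -/
def aucMod (X : Type*) [NormedAddCommGroup X] [NormedSpace ℝ X] (t : ℝ) : ℝ :=
  ⨅ x : Metric.sphere (0 : X) 1,
    ⨆ Y : {Y : Submodule ℝ X // IsClosed (Y : Set X) ∧ FiniteDimensional ℝ (X ⧸ Y)},
      ⨅ y : Metric.sphere (0 : ↥Y.1) 1, (‖(x : X) + t • ((y : ↥Y.1) : X)‖ - 1)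

/-- A normed space is asymptotically uniformly convex (AUC) if `δ̄_X(t) > 0` for all `t > 0`. -/
def IsAUC (X : Type*) [NormedAddCommGroup X] [NormedSpace ℝ X] : Prop :=
  ∀ t : ℝ, 0 < t → 0 < aucMod X t

/-- `X` admits an equivalent asymptotically uniformly convex norm, i.e. it is isomorphic, as a
topological vector space, to an AUC normed space. -/
def AUCRenormable (X : Type u) [NormedAddCommGroup X] [NormedSpace ℝ X] : Prop :=
  ∃ (Y : Type u) (_ : NormedAddCommGroup Y) (_ : NormedSpace ℝ Y),
    Nonempty (X ≃L[ℝ] Y) ∧ IsAUC Y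


variable {E F : Type*} [NormedAddCommGroup E] [NormedSpace ℝ E]
  [NormedAddCommGroup F] [NormedSpace ℝ F]

lemma isWeaklyOpen_univ : IsWeaklyOpen (univ : Set E) := @isOpen_univ _ (weakTop E)

lemma weak_continuous_functional (f : E →L[ℝ] ℝ) :
    @Continuous E ℝ (weakTop E) _ f := by
  rw [weakTop]
  exact continuous_iInf_dom (i := f) continuous_induced_dom

lemma weak_continuous_clm (T : E →L[ℝ] F) :
    @Continuous E F (weakTop E) (weakTop F) T := by
  rw [show weakTop F = ⨅ f : F →L[ℝ] ℝ, TopologicalSpace.induced (⇑f) inferInstance from rfl]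
  refine continuous_iInf_rng.2 fun g => continuous_induced_rng.2 ?_
  exact weak_continuous_functional (g.comp T)

lemma isWeaklyOpen_preimage (T : E →L[ℝ] F) {V : Set F} (hV : IsWeaklyOpen V) :
    IsWeaklyOpen (T ⁻¹' V) :=
  @Continuous.isOpen_preimage E F (weakTop E) (weakTop F) T (weak_continuous_clm T) V hV

lemma isWeaklyOpen_preimage_functional (f : E →L[ℝ] ℝ) {U : Set ℝ} (hU : IsOpen U) :
    IsWeaklyOpen (f ⁻¹' U) :=
  @Continuous.isOpen_preimage E ℝ (weakTop E) _ f (weak_continuous_functional f) U hU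

lemma isWeaklyOpen_iInter_fin {n : ℕ} {V : Fin n → Set E} (h : ∀ i, IsWeaklyOpen (V i)) :
    IsWeaklyOpen (⋂ i, V i) := by
  letI := weakTop E
  exact isOpen_iInter_of_finite h

lemma dSet_subset (ε : ℝ) (K : Set E) : dSet ε K ⊆ K := diff_subset

lemma mem_dSet {ε : ℝ} {K : Set E} {x : E} :
    x ∈ dSet ε K ↔ x ∈ K ∧ ∀ V : Set E, IsWeaklyOpen V → x ∈ V → ¬ Metric.diam (V ∩ K) < ε := by
  simp only [dSet, mem_diff, mem_sUnion, mem_setOf_eq]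
  constructor
  · rintro ⟨hK, hV⟩
    exact ⟨hK, fun V hVo hxV hd => hV ⟨V, ⟨hVo, hd⟩, hxV⟩⟩
  · rintro ⟨hK, hV⟩
    exact ⟨hK, fun ⟨V, ⟨hVo, hd⟩, hxV⟩ => hV V hVo hxV hd⟩

lemma dSet_mono {ε : ℝ} {K K' : Set E} (hK' : Bornology.IsBounded K') (h : K ⊆ K') :
    dSet ε K ⊆ dSet ε K' := by
  intro x hx
  rw [mem_dSet] at hx ⊢
  refine ⟨h hx.1, fun V hVo hxV hd => hx.2 V hVo hxV ?_⟩
  exact lt_of_le_of_lt (Metric.diam_mono (inter_subset_inter_right V h)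
    (hK'.subset inter_subset_right)) hd

lemma dSet_eq_empty_of_diam_lt {ε : ℝ} {K : Set E} (h : Metric.diam K < ε) : dSet ε K = ∅ := by
  ext x
  simp only [mem_empty_iff_false, iff_false]
  intro hx
  rw [mem_dSet] at hx
  exact hx.2 univ isWeaklyOpen_univ (mem_univ x) (by rwa [univ_inter])

lemma dIter_zero (ε : ℝ) (K : Set E) : dIter ε K 0 = K := by
  simp [dIter]

lemma dIter_nat_succ (ε : ℝ) (K : Set E) (n : ℕ) :
    dIter ε K (n + 1 : ℕ) = dSet ε (dIter ε K n) := by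
  have : ((n + 1 : ℕ) : Ordinal) = Order.succ (n : Ordinal) := by
    rw [Nat.cast_succ, Ordinal.add_one_eq_succ]
  rw [dIter, this, Ordinal.limitRecOn_succ]
  rfl

lemma dIter_nat_subset (ε : ℝ) (K : Set E) (n : ℕ) : dIter ε K n ⊆ K := by
  induction n with
  | zero => rw [Nat.cast_zero, dIter_zero]
  | succ m ih => rw [dIter_nat_succ]; exact (dSet_subset _ _).trans ih

lemma dIter_nat_mono {ε : ℝ} {K K' : Set E} (hK' : Bornology.IsBounded K') (h : K ⊆ K')
    (n : ℕ) : dIter ε K n ⊆ dIter ε K' n := by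
  induction n with
  | zero => rw [Nat.cast_zero, dIter_zero, dIter_zero]; exact h
  | succ m ih =>
      rw [dIter_nat_succ, dIter_nat_succ]
      exact dSet_mono (hK'.subset (dIter_nat_subset ε K' m)) ih

lemma exists_codim_functionals (Y : Submodule ℝ E) (hc : IsClosed (Y : Set E))
    (hf : FiniteDimensional ℝ (E ⧸ Y)) :
    ∃ (n : ℕ) (f : Fin n → (E →L[ℝ] ℝ)),
      ∀ (v : E) (θ : ℝ), 0 < θ → (∑ j, |f j v|) < θ → ∃ y ∈ Y, ‖v - y‖ < 2 * θ := by
  haveI := hc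
  haveI := hf
  let π : E →L[ℝ] (E ⧸ Y) := LinearMap.mkContinuous Y.mkQ 1 (fun v => by
    simpa using Submodule.Quotient.norm_mk_le Y v)
  let b := Module.finBasis ℝ (E ⧸ Y)
  set n := Module.finrank ℝ (E ⧸ Y) with hn
  refine ⟨n, fun j => ‖b j‖ • ((b.coord j).toContinuousLinearMap.comp π), fun v θ hθ hsum => ?_⟩
  have hnorm : ‖π v‖ ≤ ∑ j, |(‖b j‖ • ((b.coord j).toContinuousLinearMap.comp π)) v| := by
    have hv : π v = ∑ j, b.repr (π v) j • b j := (b.sum_repr (π v)).symm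
    calc ‖π v‖ = ‖∑ j, b.repr (π v) j • b j‖ := by rw [← hv]
      _ ≤ ∑ j, ‖b.repr (π v) j • b j‖ := norm_sum_le _ _
      _ = ∑ j, |(‖b j‖ • ((b.coord j).toContinuousLinearMap.comp π)) v| := by
          refine Finset.sum_congr rfl fun j _ => ?_
          simp only [ContinuousLinearMap.smul_apply, ContinuousLinearMap.comp_apply,
            LinearMap.coe_toContinuousLinearMap', Module.Basis.coord_apply, norm_smul,
            Real.norm_eq_abs, smul_eq_mul, abs_mul, abs_norm]
          ring
  have hlt : ‖(Submodule.Quotient.mk v : E ⧸ Y)‖ < θ := by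
    have : π v = (Submodule.Quotient.mk v : E ⧸ Y) := rfl
    rw [← this]; exact lt_of_le_of_lt hnorm hsum
  obtain ⟨m, hm, hmn⟩ := Submodule.Quotient.norm_mk_lt (Submodule.Quotient.mk v : E ⧸ Y) hθ
  have hmem : v - m ∈ Y := by
    rw [Submodule.Quotient.eq] at hm
    simpa using Y.neg_mem hm
  refine ⟨v - m, hmem, ?_⟩
  have : v - (v - m) = m := by abel
  rw [this]
  linarith

instance subNonempty :
    Nonempty {Y : Submodule ℝ E // IsClosed (Y : Set E) ∧ FiniteDimensional ℝ (E ⧸ Y)} := by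
  refine ⟨⟨⊤, ?_, ?_⟩⟩
  · rw [Submodule.top_coe]; exact isClosed_univ
  · haveI : Subsingleton (E ⧸ (⊤ : Submodule ℝ E)) :=
      Submodule.Quotient.subsingleton_iff.2 rfl
    infer_instance

lemma aucMod_extract {t₀ : ℝ} (ht : 0 < t₀) {c : ℝ} (hc : 0 < c)
    (hcle : c ≤ aucMod E t₀) {x : E} (hx : ‖x‖ = 1) :
    ∃ Y : Submodule ℝ E, IsClosed (Y : Set E) ∧ FiniteDimensional ℝ (E ⧸ Y) ∧
      ∀ y : E, y ∈ Y → ‖y‖ = 1 → 1 + c / 2 < ‖x + t₀ • y‖ := by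
  set S := {Y : Submodule ℝ E // IsClosed (Y : Set E) ∧ FiniteDimensional ℝ (E ⧸ Y)}
  set G : E → S → ℝ := fun x' Y => ⨅ y : Metric.sphere (0 : ↥Y.1) 1,
    (‖x' + t₀ • ((y : ↥Y.1) : E)‖ - 1) with hG
  have hGlow : ∀ (x' : E) (Y : S), -‖x'‖ - 1 ≤ G x' Y := by
    intro x' Y
    rcases isEmpty_or_nonempty (Metric.sphere (0 : ↥Y.1) 1) with h | h
    · simp only [hG]; rw [Real.iInf_of_isEmpty]
      have := norm_nonneg x'; linarith
    · refine le_ciInf fun y => ?_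
      have := norm_nonneg ((x' : E) + t₀ • ((y : ↥Y.1) : E))
      have := norm_nonneg x'
      linarith
  have hGbdd : ∀ x' : E, BddBelow (Set.range (G x')) := fun x' =>
    ⟨-‖x'‖ - 1, by rintro r ⟨Y, rfl⟩; exact hGlow x' Y⟩
  have hGhigh : ∀ (x' : E) (Y : S), G x' Y ≤ max (‖x'‖ + t₀) 0 := by
    intro x' Y
    rcases isEmpty_or_nonempty (Metric.sphere (0 : ↥Y.1) 1) with h | h
    · simp only [hG]; rw [Real.iInf_of_isEmpty]; exact le_max_right _ _
    · obtain ⟨y⟩ := h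
      refine le_trans (ciInf_le ⟨-‖x'‖ - 1, by
        rintro r ⟨y', rfl⟩
        dsimp only
        have := norm_nonneg ((x' : E) + t₀ • ((y' : ↥Y.1) : E))
        have := norm_nonneg x'
        linarith⟩ y) (le_trans ?_ (le_max_left _ _))
      have h1 : ‖((y : ↥Y.1) : E)‖ = 1 := by
        rw [Submodule.norm_coe]
        have := y.2
        rwa [mem_sphere_iff_norm, sub_zero] at this
      have h2 : ‖x' + t₀ • ((y : ↥Y.1) : E)‖ ≤ ‖x'‖ + t₀ := by
        refine le_trans (norm_add_le _ _) ?_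
        rw [norm_smul, h1, Real.norm_eq_abs, abs_of_pos ht, mul_one]
      linarith
  have hFbddAbove : ∀ x' : E, BddAbove (Set.range (G x')) := fun x' =>
    ⟨max (‖x'‖ + t₀) 0, by rintro r ⟨Y, rfl⟩; exact hGhigh x' Y⟩
  -- aucMod ≤ F x
  have h1 : aucMod E t₀ ≤ ⨆ Y : S, G x Y := by
    have : BddBelow (Set.range fun x' : Metric.sphere (0 : E) 1 => ⨆ Y : S, G (x' : E) Y) := by
      refine ⟨-2, ?_⟩
      rintro r ⟨x', rfl⟩
      have hx'n : ‖(x' : E)‖ = 1 := by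
        have := x'.2; rwa [mem_sphere_iff_norm, sub_zero] at this
      refine le_trans ?_ (le_ciSup (hFbddAbove (x' : E)) (Classical.arbitrary S))
      have := hGlow (x' : E) (Classical.arbitrary S)
      rw [hx'n] at this; linarith
    have hmem : x ∈ Metric.sphere (0 : E) 1 := by
      rwa [mem_sphere_iff_norm, sub_zero]
    exact ciInf_le this ⟨x, hmem⟩
  have h2 : c / 2 < ⨆ Y : S, G x Y := lt_of_lt_of_le (by linarith) (le_trans hcle h1)
  obtain ⟨Y₀, hY₀⟩ := exists_lt_of_lt_ciSup h2
  refine ⟨Y₀.1, Y₀.2.1, Y₀.2.2, fun y hyY hyn => ?_⟩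
  have hmem : (⟨y, hyY⟩ : ↥Y₀.1) ∈ Metric.sphere (0 : ↥Y₀.1) 1 := by
    rw [mem_sphere_iff_norm, sub_zero]
    rw [Submodule.coe_norm]
    exact hyn
  have hle := ciInf_le (c := (⟨⟨y, hyY⟩, hmem⟩ : Metric.sphere (0 : ↥Y₀.1) 1)) (f := fun y' : Metric.sphere (0 : ↥Y₀.1) 1 => ‖x + t₀ • ((y' : ↥Y₀.1) : E)‖ - 1) ⟨-‖x‖ - 1, by
    rintro r ⟨y', rfl⟩
    dsimp only
    have := norm_nonneg ((x : E) + t₀ • ((y' : ↥Y₀.1) : E))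
    have := norm_nonneg x
    linarith⟩
  have : c / 2 < ‖x + t₀ • y‖ - 1 := lt_of_lt_of_le hY₀ hle
  linarith

lemma norm_add_smul_ge {x y : E} (hx : ‖x‖ = 1) (hy : ‖y‖ = 1) {t₀ s c : ℝ}
    (ht : 0 < t₀) (hts : t₀ ≤ s) (hc : 0 ≤ c) (h : 1 + c / 2 < ‖x + t₀ • y‖) :
    1 + c / 2 ≤ ‖x + s • y‖ := by
  have hs : 0 < s := lt_of_lt_of_le ht hts
  have hkey : x + t₀ • y = (t₀ / s) • (x + s • y) + (1 - t₀ / s) • x := by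
    rw [smul_add, smul_smul, div_mul_cancel₀ _ (ne_of_gt hs), sub_smul, one_smul]
    abel
  have hds : t₀ / s ≤ 1 := (div_le_one hs).2 hts
  have hds0 : 0 < t₀ / s := div_pos ht hs
  have h2 : ‖x + t₀ • y‖ ≤ (t₀ / s) * ‖x + s • y‖ + (1 - t₀ / s) := by
    calc ‖x + t₀ • y‖ ≤ ‖(t₀ / s) • (x + s • y)‖ + ‖(1 - t₀ / s) • x‖ := by
          rw [hkey]; exact norm_add_le _ _
      _ = (t₀ / s) * ‖x + s • y‖ + (1 - t₀ / s) := by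
          rw [norm_smul, norm_smul, hx, Real.norm_eq_abs, Real.norm_eq_abs,
            abs_of_pos hds0, abs_of_nonneg (by linarith)]
          ring
  nlinarith [norm_nonneg (x + s • y)]

lemma dSet_ball_shrink (hE : IsAUC E) {ε R : ℝ} (hε : 0 < ε) (hR : 1 ≤ R) :
    ∃ δ : ℝ, 0 < δ ∧ ∀ r : ℝ, ε / 2 ≤ r → r ≤ R →
      dSet ε (Metric.closedBall (0 : E) r) ⊆ Metric.closedBall (0 : E) (r - δ) := by
  have hR0 : (0 : ℝ) < R := lt_of_lt_of_le one_pos hR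
  set t₀ : ℝ := ε / (4 * R) with ht₀def
  have ht₀ : 0 < t₀ := div_pos hε (by linarith)
  set c : ℝ := min (aucMod E t₀) 1 with hcdef
  have hc : 0 < c := lt_min (hE t₀ ht₀) one_pos
  have hc1 : c ≤ 1 := min_le_right _ _
  have hcle : c ≤ aucMod E t₀ := min_le_left _ _
  set δ : ℝ := ε * c / 64 with hδdef
  set θ : ℝ := ε * c / 64 with hθdef
  have hδ : 0 < δ := by positivity
  have hθ : 0 < θ := by positivity
  refine ⟨δ, hδ, fun r hr1 hr2 x hx => ?_⟩
  rw [mem_dSet] at hx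
  have hxr : ‖x‖ ≤ r := by
    have := hx.1; rwa [Metric.mem_closedBall, dist_zero_right] at this
  rw [Metric.mem_closedBall, dist_zero_right]
  by_contra hcon
  push_neg at hcon
  set a : ℝ := ‖x‖ with hadef
  have ha : r - δ < a := hcon
  have ha0 : 0 < a := by nlinarith
  set xh : E := a⁻¹ • x with hxhdef
  have hxh : ‖xh‖ = 1 := by
    rw [hxhdef, norm_smul, Real.norm_eq_abs, abs_of_pos (inv_pos.2 ha0), ← hadef,
      inv_mul_cancel₀ (ne_of_gt ha0)]
  obtain ⟨Y, hYc, hYf, hY⟩ := aucMod_extract ht₀ hc hcle hxh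
  obtain ⟨n, f, hf⟩ := exists_codim_functionals Y hYc hYf
  set η : ℝ := θ / (n + 1) with hηdef
  have hη : 0 < η := by positivity
  set V : Set E := ⋂ j : Fin n, (f j) ⁻¹' (Metric.ball (f j x) η) with hVdef
  have hVopen : IsWeaklyOpen V :=
    isWeaklyOpen_iInter_fin fun j => isWeaklyOpen_preimage_functional _ Metric.isOpen_ball
  have hxV : x ∈ V := by
    rw [hVdef, mem_iInter]
    exact fun j => Metric.mem_ball_self hη
  have hsmall : ∀ z ∈ V ∩ Metric.closedBall (0 : E) r, ‖z - x‖ < ε / 4 + 2 * θ := by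
    rintro z ⟨hzV, hzB⟩
    have hzr : ‖z‖ ≤ r := by rwa [Metric.mem_closedBall, dist_zero_right] at hzB
    have hsum : (∑ j, |f j (z - x)|) < θ := by
      have hterm : ∀ j : Fin n, |f j (z - x)| < η := by
        intro j
        rw [mem_iInter] at hzV
        have := hzV j
        rw [mem_preimage, Metric.mem_ball, Real.dist_eq] at this
        rwa [map_sub]
      calc (∑ j, |f j (z - x)|) ≤ ∑ _j : Fin n, η :=
            Finset.sum_le_sum fun j _ => (hterm j).le
        _ = n * η := by simp [Finset.sum_const, Finset.card_univ, nsmul_eq_mul]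
        _ < θ := by
            have hq : 0 < η := hη
            have e : η * (n + 1) = θ := by
              rw [hηdef, div_mul_cancel₀]
              positivity
            nlinarith
    obtain ⟨y, hyY, hyn⟩ := hf (z - x) θ hθ hsum
    by_cases hy : a * t₀ ≤ ‖y‖
    · exfalso
      have hy0 : 0 < ‖y‖ := lt_of_lt_of_le (mul_pos ha0 ht₀) hy
      set yh : E := ‖y‖⁻¹ • y with hyhdef
      have hyhY : yh ∈ Y := Y.smul_mem _ hyY
      have hyhn : ‖yh‖ = 1 := by
        rw [hyhdef, norm_smul, Real.norm_eq_abs, abs_of_pos (inv_pos.2 hy0),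
          inv_mul_cancel₀ (ne_of_gt hy0)]
      set s : ℝ := ‖y‖ / a with hsdef
      have hts : t₀ ≤ s := (le_div_iff₀ ha0).2 (by linarith [hy])
      have hkey : 1 + c / 2 ≤ ‖xh + s • yh‖ :=
        norm_add_smul_ge hxh hyhn ht₀ hts (by positivity) (hY yh hyhY hyhn)
      have hxy : x + y = a • (xh + s • yh) := by
        rw [smul_add, hxhdef, smul_inv_smul₀ (ne_of_gt ha0), smul_smul, hsdef, hyhdef,
          smul_smul]
        rw [mul_div_assoc']
        rw [mul_comm a]
        rw [mul_div_assoc]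
        rw [div_self (ne_of_gt ha0), mul_one, mul_inv_cancel₀ (ne_of_gt hy0), one_smul]
      have hnxy : a * (1 + c / 2) ≤ ‖x + y‖ := by
        rw [hxy, norm_smul, Real.norm_eq_abs, abs_of_pos ha0]
        exact mul_le_mul_of_nonneg_left hkey (le_of_lt ha0)
      have hz2 : ‖x + y‖ - 2 * θ < ‖z‖ := by
        have h1 : ‖(x + y) - z‖ < 2 * θ := by
          have : (x + y) - z = -((z - x) - y) := by abel
          rw [this, norm_neg]; exact hyn
        have := norm_sub_norm_le ((x + y)) z
        calc ‖x + y‖ - 2 * θ < ‖x + y‖ - ‖(x + y) - z‖ := by linarith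
          _ ≤ ‖z‖ := by linarith [norm_sub_norm_le (x + y) z]
      nlinarith
    · push_neg at hy
      have hyε : ‖y‖ < ε / 4 := by
        have h1 : a * t₀ ≤ R * t₀ := mul_le_mul_of_nonneg_right (by linarith) (le_of_lt ht₀)
        have h2 : R * t₀ = ε / 4 := by
          rw [ht₀def]; field_simp
        linarith
      calc ‖z - x‖ ≤ ‖(z - x) - y‖ + ‖y‖ := by
            have := norm_add_le ((z - x) - y) y; simpa using this
        _ < ε / 4 + 2 * θ := by linarith
  have hdiam : Metric.diam (V ∩ Metric.closedBall (0 : E) r) < ε := by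
    have hb : ∀ z ∈ V ∩ Metric.closedBall (0 : E) r,
        ∀ z' ∈ V ∩ Metric.closedBall (0 : E) r, dist z z' ≤ 2 * (ε / 4 + 2 * θ) := by
      intro z hz z' hz'
      calc dist z z' ≤ dist z x + dist x z' := dist_triangle _ _ _
        _ ≤ 2 * (ε / 4 + 2 * θ) := by
            rw [dist_eq_norm, dist_eq_norm]
            have h1 := hsmall z hz
            have h2 := hsmall z' hz'
            have : ‖x - z'‖ = ‖z' - x‖ := norm_sub_rev _ _
            linarith
    have := Metric.diam_le_of_forall_dist_le (by positivity) hb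
    have hθε : θ ≤ ε / 64 := by rw [hθdef]; nlinarith
    linarith
  exact hx.2 V hVopen hxV hdiam

lemma diam_lt_of_subset_ball {S : Set E} {r ε : ℝ} (hS : S ⊆ Metric.closedBall 0 r)
    (hr : r < ε / 2) (hε : 0 < ε) : Metric.diam S < ε := by
  rcases Set.eq_empty_or_nonempty S with h | ⟨z, hz⟩
  · rw [h, Metric.diam_empty]; exact hε
  · have hr0 : 0 ≤ r := le_trans dist_nonneg (by
      have := hS hz; rwa [Metric.mem_closedBall] at this)
    calc Metric.diam S ≤ Metric.diam (Metric.closedBall (0 : E) r) :=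
          Metric.diam_mono hS Metric.isBounded_closedBall
      _ ≤ 2 * r := Metric.diam_closedBall hr0
      _ < ε := by linarith

lemma dIter_ball_empty (hE : IsAUC E) {ε R : ℝ} (hε : 0 < ε) (hR : 1 ≤ R) :
    ∃ N : ℕ, dIter ε (Metric.closedBall (0 : E) R) N = ∅ := by
  obtain ⟨δ, hδ, hshrink⟩ := dSet_ball_shrink hE hε hR
  have key : ∀ n : ℕ, dIter ε (Metric.closedBall (0 : E) R) n = ∅ ∨
      dIter ε (Metric.closedBall (0 : E) R) n ⊆ Metric.closedBall (0 : E) (R - n * δ) := by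
    intro n
    induction n with
    | zero => right; rw [Nat.cast_zero, dIter_zero]; simp
    | succ m ih =>
        rcases ih with h | h
        · left
          rw [dIter_nat_succ, h]
          exact eq_empty_of_subset_empty (dSet_subset _ _)
        · by_cases hr : ε / 2 ≤ R - m * δ
          · right
            rw [dIter_nat_succ]
            refine (dSet_mono Metric.isBounded_closedBall h).trans ?_
            refine (hshrink (R - m * δ) hr (by nlinarith [Nat.cast_nonneg (α := ℝ) m])).trans ?_
            apply Metric.closedBall_subset_closedBall
            push_cast; linarith
          · left
            rw [dIter_nat_succ]
            exact dSet_eq_empty_of_diam_lt (diam_lt_of_subset_ball h (by linarith) hε)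
  obtain ⟨N, hN⟩ := exists_nat_gt ((R - ε / 2) / δ)
  have hNδ : R - N * δ < ε / 2 := by
    rw [div_lt_iff₀ hδ] at hN; linarith
  refine ⟨N + 1, ?_⟩
  rcases key N with h | h
  · rw [dIter_nat_succ, h]
    exact eq_empty_of_subset_empty (dSet_subset _ _)
  · rw [dIter_nat_succ]
    exact dSet_eq_empty_of_diam_lt (diam_lt_of_subset_ball h hNδ hε)

lemma dSet_image (T : E ≃L[ℝ] F) {C ε' : ℝ} (hC : 0 < C)
    (hLip : ∀ a b : F, dist (T.symm a) (T.symm b) ≤ C * dist a b)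
    {K : Set E} (hK : Bornology.IsBounded (T '' K)) :
    T '' (dSet (C * ε') K) ⊆ dSet ε' (T '' K) := by
  rintro _ ⟨x, hx, rfl⟩
  rw [mem_dSet] at hx ⊢
  refine ⟨mem_image_of_mem _ hx.1, fun V' hV'o hTxV' hd => ?_⟩
  refine hx.2 ((T : E →L[ℝ] F) ⁻¹' V') (isWeaklyOpen_preimage _ hV'o) (by
    rw [mem_preimage]; exact hTxV') ?_
  have hbV : Bornology.IsBounded (V' ∩ T '' K) := hK.subset inter_subset_right
  have hdle : Metric.diam ((T : E →L[ℝ] F) ⁻¹' V' ∩ K) ≤ C * Metric.diam (V' ∩ T '' K) := by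
    refine Metric.diam_le_of_forall_dist_le (mul_nonneg hC.le Metric.diam_nonneg) ?_
    intro a ha b hb
    have h1 : dist a b = dist (T.symm (T a)) (T.symm (T b)) := by
      rw [T.symm_apply_apply, T.symm_apply_apply]
    have h2 : T a ∈ V' ∩ T '' K := ⟨ha.1, mem_image_of_mem _ ha.2⟩
    have h3 : T b ∈ V' ∩ T '' K := ⟨hb.1, mem_image_of_mem _ hb.2⟩
    calc dist a b ≤ C * dist (T a) (T b) := by rw [h1]; exact hLip _ _
      _ ≤ C * Metric.diam (V' ∩ T '' K) :=
          mul_le_mul_of_nonneg_left (Metric.dist_le_diam_of_mem hbV h2 h3) hC.le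
  exact lt_of_le_of_lt hdle (by exact (mul_lt_mul_iff_right₀ hC).2 hd)

lemma dIter_image (T : E ≃L[ℝ] F) {C ε' : ℝ} (hC : 0 < C)
    (hLip : ∀ a b : F, dist (T.symm a) (T.symm b) ≤ C * dist a b)
    {K : Set E} (hK : Bornology.IsBounded (T '' K)) (n : ℕ) :
    T '' (dIter (C * ε') K n) ⊆ dIter ε' (T '' K) n := by
  induction n with
  | zero => rw [Nat.cast_zero, dIter_zero, dIter_zero]
  | succ m ih =>
      rw [dIter_nat_succ, dIter_nat_succ]
      refine (dSet_image T hC hLip (hK.subset (image_mono (dIter_nat_subset _ _ _)))).trans ?_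
      exact dSet_mono (hK.subset (dIter_nat_subset _ _ _)) ih

/-- **Proposition 4.4.** If a Banach space admits an equivalent asymptotically uniformly
convex norm, then its weak-fragmentability index is at most `ω`. -/
theorem phi_le_omega_of_aucRenormable (X : Type) [NormedAddCommGroup X] [NormedSpace ℝ X]
    [CompleteSpace X] (h : AUCRenormable X) :
    PhiDefined X ∧ Phi X ≤ Ordinal.omega0 := by
  obtain ⟨Y, _, _, ⟨T⟩, hAUC⟩ := h
  have key : ∀ ε : ℝ, 0 < ε → ∃ N : ℕ, dIter ε (Metric.closedBall (0 : X) 1) (N : ℕ) = ∅ := by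
    intro ε hε
    set Ts : Y →L[ℝ] X := (T.symm : Y →L[ℝ] X) with hTs
    set C : ℝ := max ‖Ts‖ 1 with hC
    have hC0 : 0 < C := lt_of_lt_of_le one_pos (le_max_right _ _)
    have hLip : ∀ a b : Y, dist (T.symm a) (T.symm b) ≤ C * dist a b := by
      intro a b
      rw [dist_eq_norm, dist_eq_norm]
      have h1 : T.symm a - T.symm b = Ts (a - b) := by
        rw [map_sub]; rfl
      rw [h1]
      calc ‖Ts (a - b)‖ ≤ ‖Ts‖ * ‖a - b‖ := Ts.le_opNorm _
        _ ≤ C * ‖a - b‖ := mul_le_mul_of_nonneg_right (le_max_left _ _) (norm_nonneg _)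
    set R : ℝ := max ‖(T : X →L[ℝ] Y)‖ 1 with hRdef
    have hR : 1 ≤ R := le_max_right _ _
    have himg : T '' Metric.closedBall (0 : X) 1 ⊆ Metric.closedBall (0 : Y) R := by
      rintro _ ⟨x, hx, rfl⟩
      rw [Metric.mem_closedBall, dist_zero_right] at hx ⊢
      calc ‖T x‖ = ‖(T : X →L[ℝ] Y) x‖ := rfl
        _ ≤ ‖(T : X →L[ℝ] Y)‖ * ‖x‖ := (T : X →L[ℝ] Y).le_opNorm _
        _ ≤ R * 1 := mul_le_mul (le_max_left _ _) hx (norm_nonneg _)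
              (le_trans zero_le_one hR)
        _ = R := mul_one R
    set ε' : ℝ := ε / C with hε'def
    have hε' : 0 < ε' := div_pos hε hC0
    have hCε' : C * ε' = ε := by
      rw [hε'def, mul_div_cancel₀ _ (ne_of_gt hC0)]
    obtain ⟨N, hN⟩ := dIter_ball_empty hAUC hε' hR (E := Y)
    refine ⟨N, ?_⟩
    have hbb : Bornology.IsBounded (T '' Metric.closedBall (0 : X) 1) :=
      Metric.isBounded_closedBall.subset himg
    have h1 : T '' (dIter ε (Metric.closedBall (0 : X) 1) N) ⊆
        dIter ε' (T '' Metric.closedBall (0 : X) 1) N := by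
      rw [← hCε']
      exact dIter_image T hC0 hLip hbb N
    have h2 : dIter ε' (T '' Metric.closedBall (0 : X) 1) N ⊆
        dIter ε' (Metric.closedBall (0 : Y) R) N :=
      dIter_nat_mono Metric.isBounded_closedBall himg N
    have h3 : T '' (dIter ε (Metric.closedBall (0 : X) 1) N) = ∅ :=
      eq_empty_of_subset_empty (by rw [← hN]; exact h1.trans h2)
    exact image_eq_empty.mp h3
  constructor
  · intro ε hε
    obtain ⟨N, hN⟩ := key ε hε
    exact ⟨(N : ℕ), hN⟩
  · refine ciSup_le' fun ⟨ε, hε⟩ => ?_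
    obtain ⟨N, hN⟩ := key ε hε
    have h1 : PhiEps X ε ≤ (N : Ordinal) := csInf_le' hN
    exact le_of_lt (lt_of_le_of_lt h1 (Ordinal.nat_lt_omega0 N))

end
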